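/- Let $0 < t < \tfrac12 < s < 1$ with $s + t < 1$, and let $K$ be the attractor of the Mendivil–Taylor IFS on $\mathbb{R}^2$ given by $\varphi_1(x,y) = (tx, sy)$, $\varphi_2(x,y) = (sx, ty + (1-t))$, $\varphi_3(x,y) = (sx + (1-s), ty)$, $\varphi_4(x,y) = (tx + (1-t), sy + (1-s))$. Then $\pi_W(K) = \pi_W([0,1]^2)$ for every one-dimensional linear subspace $W$ of $\mathbb{R}^2$ if and only if $\frac{1 - \sqrt{2s-1}}{2} \le t$. -/

import Mathlib

open Set Module

/-- The point `(a, b)` of the Euclidean plane. -/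
noncomputable def mk2 (a b : ℝ) : EuclideanSpace ℝ (Fin 2) := WithLp.toLp 2 ![a, b]

/-- Orthogonal projection onto a subspace, viewed as a map of the ambient space. -/
noncomputable def orthProj (W : Submodule ℝ (EuclideanSpace ℝ (Fin 2)))
    (x : EuclideanSpace ℝ (Fin 2)) : EuclideanSpace ℝ (Fin 2) :=
  (W.orthogonalProjection x : EuclideanSpace ℝ (Fin 2))

/-- The unit square `[0,1]²`. -/
def unitSq : Set (EuclideanSpace ℝ (Fin 2)) := {p | ∀ i, p i ∈ Icc (0 : ℝ) 1}


/-- lower endpoint of the shadow of the unit square under the functional `(a, b)`. -/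
def mlo (a b : ℝ) : ℝ := min a 0 + min b 0
/-- upper endpoint. -/
def mhi (a b : ℝ) : ℝ := max a 0 + max b 0

lemma mlo_neg (a b : ℝ) : mlo (-a) (-b) = -mhi a b := by
  have h1 : min (-a) 0 = -max a 0 := by rw [← neg_zero, min_neg_neg, neg_zero]
  have h2 : min (-b) 0 = -max b 0 := by rw [← neg_zero, min_neg_neg, neg_zero]
  rw [mlo, mhi, h1, h2]; ring

lemma mhi_neg (a b : ℝ) : mhi (-a) (-b) = -mlo a b := by
  have h1 : max (-a) 0 = -min a 0 := by rw [← neg_zero, max_neg_neg, neg_zero]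
  have h2 : max (-b) 0 = -min b 0 := by rw [← neg_zero, max_neg_neg, neg_zero]
  rw [mlo, mhi, h1, h2]; ring

lemma mlo_pp {a b : ℝ} (ha : 0 ≤ a) (hb : 0 ≤ b) : mlo a b = 0 := by
  simp [mlo, min_eq_right, ha, hb]
lemma mhi_pp {a b : ℝ} (ha : 0 ≤ a) (hb : 0 ≤ b) : mhi a b = a + b := by
  simp [mhi, max_eq_left, ha, hb]
lemma mlo_pn {a b : ℝ} (ha : 0 ≤ a) (hb : b ≤ 0) : mlo a b = b := by
  simp [mlo, min_eq_right, min_eq_left, ha, hb]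
lemma mhi_pn {a b : ℝ} (ha : 0 ≤ a) (hb : b ≤ 0) : mhi a b = a := by
  simp [mhi, max_eq_left, max_eq_right, ha, hb]

lemma coverPos (t s : ℝ) (ht0 : 0 < t) (ht : t < 1 / 2) (hs : 1 / 2 < s) (hs1 : s < 1)
    (hst : s + t < 1) (hcond : (1 - 2*t)^2 ≤ 2*s - 1) (a b c : ℝ) (ha : 0 ≤ a)
    (hc : c ∈ Icc (mlo a b) (mhi a b)) :
    (c ∈ Icc (mlo (a*t) (b*s)) (mhi (a*t) (b*s))) ∨
    (c - b*(1-t) ∈ Icc (mlo (a*s) (b*t)) (mhi (a*s) (b*t))) ∨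
    (c - a*(1-s) ∈ Icc (mlo (a*s) (b*t)) (mhi (a*s) (b*t))) ∨
    (c - (a*(1-t)+b*(1-s)) ∈ Icc (mlo (a*t) (b*s)) (mhi (a*t) (b*s))) := by
  obtain ⟨hc1, hc2⟩ := hc
  rcases le_total 0 b with hb | hb
  · -- both nonneg
    rw [mlo_pp ha hb] at hc1; rw [mhi_pp ha hb] at hc2
    rw [mlo_pp (a := a*t) (b := b*s) (by positivity) (by positivity),
        mhi_pp (a := a*t) (b := b*s) (by positivity) (by positivity),
        mlo_pp (a := a*s) (b := b*t) (by positivity) (by positivity),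
        mhi_pp (a := a*s) (b := b*t) (by positivity) (by positivity)]
    rcases le_or_gt c (a*t + b*s) with h1 | h1
    · exact Or.inl ⟨hc1, h1⟩
    rcases le_or_gt (a*(1-2*t)) (b*(2*s-1)) with hAB | hAB
    · refine Or.inr (Or.inr (Or.inr ⟨by linarith, by linarith⟩))
    · -- a big relative to b
      have key : b*(1-s-t) ≤ a*t := by nlinarith [sq_nonneg (1-2*t), mul_nonneg hb (sq_nonneg (1-2*t))]
      rcases le_or_gt c (a*s + b) with h2 | h2
      · exact Or.inr (Or.inl ⟨by linarith, by linarith⟩)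
      rcases le_or_gt c (a + b*t) with h3 | h3
      · exact Or.inr (Or.inr (Or.inl ⟨by nlinarith [mul_nonneg ha (show (0:ℝ) ≤ 2*s-1 by linarith)], by linarith⟩))
      · exact Or.inr (Or.inr (Or.inr ⟨by linarith, by linarith⟩))
  · -- a ≥ 0 ≥ b
    rw [mlo_pn ha hb] at hc1; rw [mhi_pn ha hb] at hc2
    rw [mlo_pn (a := a*t) (b := b*s) (by positivity) (by nlinarith),
        mhi_pn (a := a*t) (b := b*s) (by positivity) (by nlinarith),
        mlo_pn (a := a*s) (b := b*t) (by positivity) (by nlinarith),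
        mhi_pn (a := a*s) (b := b*t) (by positivity) (by nlinarith)]
    -- P1 = [b*s, a*t], P2 = c - b*(1-t) ∈ [b*t, a*s], P3 = c - a*(1-s) ∈ [b*t, a*s],
    -- P4 = c - (a*(1-t)+b*(1-s)) ∈ [b*s, a*t]
    rcases le_or_gt (-b*(1-2*t)) (a*(2*s-1)) with hE | hE
    · -- chain P2 → P3
      rcases le_or_gt c (a*s + b*(1-t)) with h1 | h1
      · exact Or.inr (Or.inl ⟨by linarith, by linarith⟩)
      · exact Or.inr (Or.inr (Or.inl ⟨by linarith, by linarith⟩))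
    · have hC1 : a*(1-2*t) ≤ -b := by nlinarith [sq_nonneg (1-2*t), mul_nonneg ha (sq_nonneg (1-2*t))]
      rcases le_or_gt (-b*(1-s-t)) (a*s) with hC2 | hC2
      · -- chain P2 → P1 → P4 → P3
        rcases le_or_gt c (a*s + b*(1-t)) with h1 | h1
        · exact Or.inr (Or.inl ⟨by linarith, by linarith⟩)
        rcases le_or_gt c (a*t) with h2 | h2
        · exact Or.inl ⟨by linarith, by linarith⟩
        rcases le_or_gt c (a + b*(1-s)) with h3 | h3
        · exact Or.inr (Or.inr (Or.inr ⟨by linarith, by linarith⟩))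
        · exact Or.inr (Or.inr (Or.inl ⟨by linarith, by linarith⟩))
      · -- chain P2 → P4 → P1 → P3
        have hsq : (1-s-t)^2 ≤ s*t := by nlinarith [sq_nonneg (1-2*t)]
        have hD : a*(1-s-t) ≤ -b*t := by nlinarith [mul_pos (show (0:ℝ) < s by linarith) ht0]
        rcases le_or_gt c (a*s + b*(1-t)) with h1 | h1
        · exact Or.inr (Or.inl ⟨by linarith, by linarith⟩)
        rcases le_or_gt c (a + b*(1-s)) with h2 | h2
        · exact Or.inr (Or.inr (Or.inr ⟨by linarith, by linarith⟩))
        rcases le_or_gt c (a*t) with h3 | h3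
        · exact Or.inl ⟨by nlinarith [mul_nonneg (neg_nonneg.2 hb) (show (0:ℝ) ≤ 2*s-1 by linarith)], by linarith⟩
        · exact Or.inr (Or.inr (Or.inl ⟨by linarith, by linarith⟩))

lemma cover (t s : ℝ) (ht0 : 0 < t) (ht : t < 1 / 2) (hs : 1 / 2 < s) (hs1 : s < 1)
    (hst : s + t < 1) (hcond : (1 - 2*t)^2 ≤ 2*s - 1) (a b c : ℝ)
    (hc : c ∈ Icc (mlo a b) (mhi a b)) :
    (c ∈ Icc (mlo (a*t) (b*s)) (mhi (a*t) (b*s))) ∨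
    (c - b*(1-t) ∈ Icc (mlo (a*s) (b*t)) (mhi (a*s) (b*t))) ∨
    (c - a*(1-s) ∈ Icc (mlo (a*s) (b*t)) (mhi (a*s) (b*t))) ∨
    (c - (a*(1-t)+b*(1-s)) ∈ Icc (mlo (a*t) (b*s)) (mhi (a*t) (b*s))) := by
  rcases le_total 0 a with ha | ha
  · exact coverPos t s ht0 ht hs hs1 hst hcond a b c ha hc
  · have hc' : -c ∈ Icc (mlo (-a) (-b)) (mhi (-a) (-b)) := by
      rw [mlo_neg, mhi_neg]
      exact ⟨neg_le_neg hc.2, neg_le_neg hc.1⟩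
    have H := coverPos t s ht0 ht hs hs1 hst hcond (-a) (-b) (-c) (by linarith) hc'
    have e1 : (-a)*t = -(a*t) := by ring
    have e2 : (-b)*s = -(b*s) := by ring
    have e3 : (-a)*s = -(a*s) := by ring
    have e4 : (-b)*t = -(b*t) := by ring
    rw [e1, e2, e3, e4, mlo_neg, mhi_neg, mlo_neg, mhi_neg] at H
    rcases H with h | h | h | h
    · exact Or.inl ⟨by linarith [h.2], by linarith [h.1]⟩
    · refine Or.inr (Or.inl ⟨?_, ?_⟩) <;>
        [skip; skip] <;> [linarith [h.2]; linarith [h.1]]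
    · exact Or.inr (Or.inr (Or.inl ⟨by linarith [h.2], by linarith [h.1]⟩))
    · exact Or.inr (Or.inr (Or.inr ⟨by linarith [h.2], by linarith [h.1]⟩))

lemma mk2_apply0 (a b : ℝ) : mk2 a b 0 = a := by simp [mk2]
lemma mk2_apply1 (a b : ℝ) : mk2 a b 1 = b := by simp [mk2]
lemma mk2_eta (p : EuclideanSpace ℝ (Fin 2)) : mk2 (p 0) (p 1) = p := by
  ext i; fin_cases i <;> simp [mk2]

section K
variable {t s : ℝ} {K : Set (EuclideanSpace ℝ (Fin 2))}

lemma branch (hKattr : K =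
      ((fun p => mk2 (t * p 0) (s * p 1)) '' K) ∪
      ((fun p => mk2 (s * p 0) (t * p 1 + (1 - t))) '' K) ∪
      ((fun p => mk2 (s * p 0 + (1 - s)) (t * p 1)) '' K) ∪
      ((fun p => mk2 (t * p 0 + (1 - t)) (s * p 1 + (1 - s))) '' K))
    {p : EuclideanSpace ℝ (Fin 2)} (hp : p ∈ K) :
    ∃ q ∈ K, (p 0 = t * q 0 ∧ p 1 = s * q 1) ∨ (p 0 = s * q 0 ∧ p 1 = t * q 1 + (1 - t)) ∨
      (p 0 = s * q 0 + (1 - s) ∧ p 1 = t * q 1) ∨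
      (p 0 = t * q 0 + (1 - t) ∧ p 1 = s * q 1 + (1 - s)) := by
  rw [hKattr] at hp
  rcases hp with ((⟨q, hq, rfl⟩ | ⟨q, hq, rfl⟩) | ⟨q, hq, rfl⟩) | ⟨q, hq, rfl⟩
  · exact ⟨q, hq, Or.inl ⟨mk2_apply0 _ _, mk2_apply1 _ _⟩⟩
  · exact ⟨q, hq, Or.inr (Or.inl ⟨mk2_apply0 _ _, mk2_apply1 _ _⟩)⟩
  · exact ⟨q, hq, Or.inr (Or.inr (Or.inl ⟨mk2_apply0 _ _, mk2_apply1 _ _⟩))⟩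
  · exact ⟨q, hq, Or.inr (Or.inr (Or.inr ⟨mk2_apply0 _ _, mk2_apply1 _ _⟩))⟩

lemma K_subset_unitSq (ht0 : 0 < t) (ht : t < 1 / 2) (hs : 1 / 2 < s) (hs1 : s < 1)
    (hKne : K.Nonempty) (hKcpt : IsCompact K)
    (hKattr : K =
      ((fun p => mk2 (t * p 0) (s * p 1)) '' K) ∪
      ((fun p => mk2 (s * p 0) (t * p 1 + (1 - t))) '' K) ∪
      ((fun p => mk2 (s * p 0 + (1 - s)) (t * p 1)) '' K) ∪
      ((fun p => mk2 (t * p 0 + (1 - t)) (s * p 1 + (1 - s))) '' K)) :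
    K ⊆ unitSq := by
  have hcont : ∀ i : Fin 2, Continuous (fun p : EuclideanSpace ℝ (Fin 2) => p i) :=
    fun i => (EuclideanSpace.proj i).continuous
  have hmax : ∀ i : Fin 2, ∀ p ∈ K, p i ≤ 1 := by
    intro i
    obtain ⟨z, hzK, hz⟩ := hKcpt.exists_isMaxOn hKne ((hcont i).continuousOn)
    have hb : z i ≤ 1 := by
      obtain ⟨q, hqK, hcase⟩ := branch hKattr hzK
      have hq := hz hqK
      fin_cases i <;>
        rcases hcase with ⟨h0, h1⟩ | ⟨h0, h1⟩ | ⟨h0, h1⟩ | ⟨h0, h1⟩ <;>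
        · simp only [Fin.mk_zero, Fin.mk_one, Set.mem_setOf_eq] at hq ⊢
          nlinarith [hq]
    exact fun p hp => le_trans (hz hp) hb
  have hmin : ∀ i : Fin 2, ∀ p ∈ K, 0 ≤ p i := by
    intro i
    obtain ⟨z, hzK, hz⟩ := hKcpt.exists_isMinOn hKne ((hcont i).continuousOn)
    have hb : 0 ≤ z i := by
      obtain ⟨q, hqK, hcase⟩ := branch hKattr hzK
      have hq := hz hqK
      fin_cases i <;>
        rcases hcase with ⟨h0, h1⟩ | ⟨h0, h1⟩ | ⟨h0, h1⟩ | ⟨h0, h1⟩ <;>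
        · simp only [Fin.mk_zero, Fin.mk_one, Set.mem_setOf_eq] at hq ⊢
          nlinarith [hq]
    exact fun p hp => le_trans hb (hz hp)
  exact fun p hp i => ⟨hmin i p hp, hmax i p hp⟩

end K

/-- shadow of a set under the linear functional `(a, b)`. -/
def shad (A : Set (EuclideanSpace ℝ (Fin 2))) (a b : ℝ) : Set ℝ :=
  (fun p => a * p 0 + b * p 1) '' A

lemma minmax_mul {u x : ℝ} (hx : x ∈ Icc (0:ℝ) 1) : min u 0 ≤ u * x ∧ u * x ≤ max u 0 := by
  rcases le_total u 0 with h | h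
  · rw [min_eq_left h, max_eq_right h]
    constructor <;> nlinarith [hx.1, hx.2]
  · rw [min_eq_right h, max_eq_left h]
    constructor <;> nlinarith [hx.1, hx.2]

lemma shad_subset_Icc {A : Set (EuclideanSpace ℝ (Fin 2))} (hA : A ⊆ unitSq) (a b : ℝ) :
    shad A a b ⊆ Icc (mlo a b) (mhi a b) := by
  rintro _ ⟨p, hp, rfl⟩
  obtain ⟨h1, h2⟩ := minmax_mul (hA hp 0)
  obtain ⟨h3, h4⟩ := minmax_mul (u := b) (hA hp 1)
  exact ⟨add_le_add h1 h3, add_le_add h2 h4⟩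

lemma mhi_sub_mlo (a b : ℝ) : mhi a b - mlo a b = |a| + |b| := by
  have ha : max a 0 - min a 0 = |a| := by
    rcases le_total a 0 with h | h
    · rw [abs_of_nonpos h, max_eq_right h, min_eq_left h]; ring
    · rw [abs_of_nonneg h, max_eq_left h, min_eq_right h]; ring
  have hb : max b 0 - min b 0 = |b| := by
    rcases le_total b 0 with h | h
    · rw [abs_of_nonpos h, max_eq_right h, min_eq_left h]; ring
    · rw [abs_of_nonneg h, max_eq_left h, min_eq_right h]; ring
  rw [mlo, mhi, ← ha, ← hb]; ring

section K
variable {t s : ℝ} {K : Set (EuclideanSpace ℝ (Fin 2))}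

lemma shad_pieces (hKattr : K =
      ((fun p => mk2 (t * p 0) (s * p 1)) '' K) ∪
      ((fun p => mk2 (s * p 0) (t * p 1 + (1 - t))) '' K) ∪
      ((fun p => mk2 (s * p 0 + (1 - s)) (t * p 1)) '' K) ∪
      ((fun p => mk2 (t * p 0 + (1 - t)) (s * p 1 + (1 - s))) '' K)) (a b : ℝ) :
    (∀ x ∈ shad K (a*t) (b*s), x ∈ shad K a b) ∧
    (∀ x ∈ shad K (a*s) (b*t), x + b*(1-t) ∈ shad K a b) ∧
    (∀ x ∈ shad K (a*s) (b*t), x + a*(1-s) ∈ shad K a b) ∧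
    (∀ x ∈ shad K (a*t) (b*s), x + (a*(1-t)+b*(1-s)) ∈ shad K a b) := by
  have m1 : ∀ p ∈ K, mk2 (t * p 0) (s * p 1) ∈ K := fun p hp => by
    rw [hKattr]; exact Or.inl (Or.inl (Or.inl ⟨p, hp, rfl⟩))
  have m2 : ∀ p ∈ K, mk2 (s * p 0) (t * p 1 + (1 - t)) ∈ K := fun p hp => by
    rw [hKattr]; exact Or.inl (Or.inl (Or.inr ⟨p, hp, rfl⟩))
  have m3 : ∀ p ∈ K, mk2 (s * p 0 + (1 - s)) (t * p 1) ∈ K := fun p hp => by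
    rw [hKattr]; exact Or.inl (Or.inr ⟨p, hp, rfl⟩)
  have m4 : ∀ p ∈ K, mk2 (t * p 0 + (1 - t)) (s * p 1 + (1 - s)) ∈ K := fun p hp => by
    rw [hKattr]; exact Or.inr ⟨p, hp, rfl⟩
  refine ⟨?_, ?_, ?_, ?_⟩ <;> rintro _ ⟨p, hp, rfl⟩
  · exact ⟨mk2 (t * p 0) (s * p 1), m1 p hp, by simp only [mk2_apply0, mk2_apply1]; ring⟩
  · exact ⟨mk2 (s * p 0) (t * p 1 + (1 - t)), m2 p hp, by simp only [mk2_apply0, mk2_apply1]; ring⟩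
  · exact ⟨mk2 (s * p 0 + (1 - s)) (t * p 1), m3 p hp, by simp only [mk2_apply0, mk2_apply1]; ring⟩
  · exact ⟨mk2 (t * p 0 + (1 - t)) (s * p 1 + (1 - s)), m4 p hp,
      by simp only [mk2_apply0, mk2_apply1]; ring⟩

lemma shad_decomp (hKattr : K =
      ((fun p => mk2 (t * p 0) (s * p 1)) '' K) ∪
      ((fun p => mk2 (s * p 0) (t * p 1 + (1 - t))) '' K) ∪
      ((fun p => mk2 (s * p 0 + (1 - s)) (t * p 1)) '' K) ∪
      ((fun p => mk2 (t * p 0 + (1 - t)) (s * p 1 + (1 - s))) '' K)) (a b : ℝ)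
    {x : ℝ} (hx : x ∈ shad K a b) :
    (x ∈ shad K (a*t) (b*s)) ∨ (x - b*(1-t) ∈ shad K (a*s) (b*t)) ∨
    (x - a*(1-s) ∈ shad K (a*s) (b*t)) ∨ (x - (a*(1-t)+b*(1-s)) ∈ shad K (a*t) (b*s)) := by
  obtain ⟨p, hp, rfl⟩ := hx
  obtain ⟨q, hq, hcase⟩ := branch hKattr hp
  rcases hcase with ⟨h0, h1⟩ | ⟨h0, h1⟩ | ⟨h0, h1⟩ | ⟨h0, h1⟩
  · exact Or.inl ⟨q, hq, by simp only [h0, h1]; ring⟩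
  · exact Or.inr (Or.inl ⟨q, hq, by simp only [h0, h1]; ring⟩)
  · exact Or.inr (Or.inr (Or.inl ⟨q, hq, by simp only [h0, h1]; ring⟩))
  · exact Or.inr (Or.inr (Or.inr ⟨q, hq, by simp only [h0, h1]; ring⟩))

lemma isometry_add_right' (d : ℝ) : Isometry (fun x : ℝ => x + d) :=
  Isometry.of_dist_eq fun x y => by rw [Real.dist_eq, Real.dist_eq]; congr 1; ring

lemma infDist_shift (c d : ℝ) (A : Set ℝ) :
    Metric.infDist c ((fun x => x + d) '' A) = Metric.infDist (c - d) A := by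
  have h : c = (fun x : ℝ => x + d) (c - d) := by simp
  conv_lhs => rw [h]
  rw [Metric.infDist_image (isometry_add_right' d)]

lemma shad_key (ht0 : 0 < t) (ht : t < 1 / 2) (hs : 1 / 2 < s) (hs1 : s < 1)
    (hst : s + t < 1) (hcond : (1 - 2*t)^2 ≤ 2*s - 1)
    (hKne : K.Nonempty) (hKcpt : IsCompact K)
    (hKattr : K =
      ((fun p => mk2 (t * p 0) (s * p 1)) '' K) ∪
      ((fun p => mk2 (s * p 0) (t * p 1 + (1 - t))) '' K) ∪
      ((fun p => mk2 (s * p 0 + (1 - s)) (t * p 1)) '' K) ∪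
      ((fun p => mk2 (t * p 0 + (1 - t)) (s * p 1 + (1 - s))) '' K)) :
    ∀ (n : ℕ) (a b : ℝ), ∀ c ∈ Icc (mlo a b) (mhi a b),
      Metric.infDist c (shad K a b) ≤ (|a| + |b|) * s^n := by
  have hKsq := K_subset_unitSq ht0 ht hs hs1 hKne hKcpt hKattr
  have hne : ∀ a b : ℝ, (shad K a b).Nonempty := fun a b => hKne.image _
  intro n
  induction n with
  | zero =>
    intro a b c hc
    obtain ⟨z, hz⟩ := hne a b
    have hzi := shad_subset_Icc hKsq a b hz
    calc Metric.infDist c (shad K a b) ≤ dist c z := Metric.infDist_le_dist_of_mem hz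
    _ ≤ (|a| + |b|) * s ^ 0 := by
        rw [Real.dist_eq, pow_zero, mul_one, ← mhi_sub_mlo a b]
        rw [abs_le]
        constructor <;> [linarith [hc.1, hzi.2]; linarith [hc.2, hzi.1]]
  | succ n ih =>
    intro a b c hc
    have habs : ∀ u : ℝ, |u * t| = |u| * t := fun u => by
      rw [abs_mul, abs_of_nonneg (le_of_lt ht0)]
    have habs' : ∀ u : ℝ, |u * s| = |u| * s := fun u => by
      rw [abs_mul, abs_of_nonneg (by linarith : (0:ℝ) ≤ s)]
    have hpow : (0:ℝ) ≤ s ^ n := by positivity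
    have hmul : ∀ u v : ℝ, (|u * t| + |v * s|) * s ^ n ≤ (|u| + |v|) * s ^ (n + 1) := by
      intro u v
      rw [habs, habs', pow_succ]
      have h1 : |u| * t + |v| * s ≤ (|u| + |v|) * s := by
        nlinarith [abs_nonneg u, abs_nonneg v]
      nlinarith [abs_nonneg u, abs_nonneg v]
    have hmul' : ∀ u v : ℝ, (|u * s| + |v * t|) * s ^ n ≤ (|u| + |v|) * s ^ (n + 1) := by
      intro u v
      rw [habs, habs', pow_succ]
      have h1 : |u| * s + |v| * t ≤ (|u| + |v|) * s := by
        nlinarith [abs_nonneg u, abs_nonneg v]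
      nlinarith [abs_nonneg u, abs_nonneg v]
    obtain ⟨hp1, hp2, hp3, hp4⟩ := shad_pieces hKattr a b
    rcases cover t s ht0 ht hs hs1 hst hcond a b c hc with h | h | h | h
    · calc Metric.infDist c (shad K a b)
          ≤ Metric.infDist c ((fun x => x + (0:ℝ)) '' shad K (a*t) (b*s)) := by
            apply Metric.infDist_le_infDist_of_subset _ ((hne _ _).image _)
            rintro _ ⟨x, hx, rfl⟩
            simpa using hp1 x hx
      _ = Metric.infDist (c - 0) (shad K (a*t) (b*s)) := infDist_shift _ _ _
      _ ≤ (|a*t| + |b*s|) * s ^ n := ih (a*t) (b*s) _ (by simpa using h)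
      _ ≤ (|a| + |b|) * s ^ (n+1) := hmul a b
    · calc Metric.infDist c (shad K a b)
          ≤ Metric.infDist c ((fun x => x + b*(1-t)) '' shad K (a*s) (b*t)) := by
            apply Metric.infDist_le_infDist_of_subset _ ((hne _ _).image _)
            rintro _ ⟨x, hx, rfl⟩
            exact hp2 x hx
      _ = Metric.infDist (c - b*(1-t)) (shad K (a*s) (b*t)) := infDist_shift _ _ _
      _ ≤ (|a*s| + |b*t|) * s ^ n := ih (a*s) (b*t) _ h
      _ ≤ (|a| + |b|) * s ^ (n+1) := hmul' a b
    · calc Metric.infDist c (shad K a b)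
          ≤ Metric.infDist c ((fun x => x + a*(1-s)) '' shad K (a*s) (b*t)) := by
            apply Metric.infDist_le_infDist_of_subset _ ((hne _ _).image _)
            rintro _ ⟨x, hx, rfl⟩
            exact hp3 x hx
      _ = Metric.infDist (c - a*(1-s)) (shad K (a*s) (b*t)) := infDist_shift _ _ _
      _ ≤ (|a*s| + |b*t|) * s ^ n := ih (a*s) (b*t) _ h
      _ ≤ (|a| + |b|) * s ^ (n+1) := hmul' a b
    · calc Metric.infDist c (shad K a b)
          ≤ Metric.infDist c ((fun x => x + (a*(1-t)+b*(1-s))) '' shad K (a*t) (b*s)) := by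
            apply Metric.infDist_le_infDist_of_subset _ ((hne _ _).image _)
            rintro _ ⟨x, hx, rfl⟩
            exact hp4 x hx
      _ = Metric.infDist (c - (a*(1-t)+b*(1-s))) (shad K (a*t) (b*s)) := infDist_shift _ _ _
      _ ≤ (|a*t| + |b*s|) * s ^ n := ih (a*t) (b*s) _ h
      _ ≤ (|a| + |b|) * s ^ (n+1) := hmul a b

lemma shad_eq_Icc (ht0 : 0 < t) (ht : t < 1 / 2) (hs : 1 / 2 < s) (hs1 : s < 1)
    (hst : s + t < 1) (hcond : (1 - 2*t)^2 ≤ 2*s - 1)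
    (hKne : K.Nonempty) (hKcpt : IsCompact K)
    (hKattr : K =
      ((fun p => mk2 (t * p 0) (s * p 1)) '' K) ∪
      ((fun p => mk2 (s * p 0) (t * p 1 + (1 - t))) '' K) ∪
      ((fun p => mk2 (s * p 0 + (1 - s)) (t * p 1)) '' K) ∪
      ((fun p => mk2 (t * p 0 + (1 - t)) (s * p 1 + (1 - s))) '' K)) (a b : ℝ) :
    shad K a b = Icc (mlo a b) (mhi a b) := by
  have hKsq := K_subset_unitSq ht0 ht hs hs1 hKne hKcpt hKattr
  refine subset_antisymm (shad_subset_Icc hKsq a b) ?_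
  intro c hc
  have hkey := shad_key ht0 ht hs hs1 hst hcond hKne hKcpt hKattr
  have hcl : IsClosed (shad K a b) :=
    (hKcpt.image (((continuous_const.mul (EuclideanSpace.proj (0 : Fin 2)).continuous)).add
      ((continuous_const.mul (EuclideanSpace.proj (1 : Fin 2)).continuous)))).isClosed
  have hzero : Metric.infDist c (shad K a b) ≤ 0 := by
    have htend : Filter.Tendsto (fun n : ℕ => (|a| + |b|) * s ^ n) Filter.atTop (nhds 0) := by
      have := tendsto_pow_atTop_nhds_zero_of_lt_one (by linarith : (0:ℝ) ≤ s) hs1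
      simpa using this.const_mul (|a| + |b|)
    exact ge_of_tendsto' htend fun n => hkey n a b c hc
  have h0 : Metric.infDist c (shad K a b) = 0 :=
    le_antisymm hzero Metric.infDist_nonneg
  exact (IsClosed.mem_iff_infDist_zero hcl (hKne.image _)).mpr h0

end K

lemma shad_unitSq (a b : ℝ) : shad unitSq a b = Icc (mlo a b) (mhi a b) := by
  refine subset_antisymm (shad_subset_Icc (fun p hp => hp) a b) ?_
  obtain ⟨u, hu0, hu1', hu1, hu2⟩ :
      ∃ u, 0 ≤ u ∧ u ≤ 1 ∧ a * u = min a 0 ∧ a * (1 - u) = max a 0 := by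
    rcases le_total 0 a with h | h
    · exact ⟨0, le_refl _, zero_le_one, by simp [min_eq_right h], by simp [max_eq_left h]⟩
    · exact ⟨1, zero_le_one, le_refl _, by simp [min_eq_left h], by simp [max_eq_right h]⟩
  obtain ⟨v, hv0, hv1', hv1, hv2⟩ :
      ∃ v, 0 ≤ v ∧ v ≤ 1 ∧ b * v = min b 0 ∧ b * (1 - v) = max b 0 := by
    rcases le_total 0 b with h | h
    · exact ⟨0, le_refl _, zero_le_one, by simp [min_eq_right h], by simp [max_eq_left h]⟩
    · exact ⟨1, zero_le_one, le_refl _, by simp [min_eq_left h], by simp [max_eq_right h]⟩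
  intro c hc
  obtain ⟨hc1, hc2⟩ := hc
  have hle : mlo a b ≤ mhi a b := le_trans hc1 hc2
  obtain ⟨θ, hθ0, hθ1, hθc⟩ : ∃ θ : ℝ, 0 ≤ θ ∧ θ ≤ 1 ∧
      (1 - θ) * mlo a b + θ * mhi a b = c := by
    rcases eq_or_lt_of_le hle with h | h
    · exact ⟨0, le_refl _, zero_le_one, by rw [← h] at hc2 ⊢; simp; linarith⟩
    · have hd : (c - mlo a b) / (mhi a b - mlo a b) * (mhi a b - mlo a b) = c - mlo a b :=
        div_mul_cancel₀ _ (by linarith)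
      exact ⟨(c - mlo a b) / (mhi a b - mlo a b), div_nonneg (by linarith) (by linarith),
        (div_le_one (by linarith)).mpr (by linarith), by linear_combination hd⟩
  set x : ℝ := (1 - θ) * u + θ * (1 - u) with hx
  set y : ℝ := (1 - θ) * v + θ * (1 - v) with hy
  refine ⟨mk2 x y, ?_, ?_⟩
  · intro i
    fin_cases i <;>
      simp only [Fin.mk_zero, Fin.mk_one, mk2_apply0, mk2_apply1, Set.mem_Icc] <;>
      constructor <;> nlinarith
  · simp only [mk2_apply0, mk2_apply1]
    have e1 : a * x = (1 - θ) * (a * u) + θ * (a * (1 - u)) := by rw [hx]; ring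
    have e2 : b * y = (1 - θ) * (b * v) + θ * (b * (1 - v)) := by rw [hy]; ring
    rw [e1, e2, hu1, hu2, hv1, hv2, ← hθc, mlo, mhi]
    ring

lemma inner_eq (v x : EuclideanSpace ℝ (Fin 2)) :
    (inner ℝ v x : ℝ) = v 0 * x 0 + v 1 * x 1 := by
  simp [PiLp.inner_apply, RCLike.inner_apply, Fin.sum_univ_two, mul_comm]

lemma proj_image (v : EuclideanSpace ℝ (Fin 2)) (A : Set (EuclideanSpace ℝ (Fin 2))) :
    orthProj (Submodule.span ℝ {v}) '' A =
      (fun c : ℝ => (c / ‖v‖^2) • v) '' shad A (v 0) (v 1) := by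
  have hfun : orthProj (Submodule.span ℝ {v}) =
      (fun c : ℝ => (c / ‖v‖^2) • v) ∘ (fun p => v 0 * p 0 + v 1 * p 1) := by
    funext x
    show ((ℝ ∙ v).starProjection x : EuclideanSpace ℝ (Fin 2)) = _
    rw [Submodule.starProjection_singleton]
    simp only [Function.comp_apply, ← inner_eq]
    norm_num
  rw [hfun, Set.image_comp]
  rfl

lemma ginj {v : EuclideanSpace ℝ (Fin 2)} (hv : v ≠ 0) :
    Function.Injective (fun c : ℝ => (c / ‖v‖^2) • v) := by
  intro c c' h
  have hv2 : (‖v‖^2 : ℝ) ≠ 0 := pow_ne_zero _ (norm_ne_zero_iff.mpr hv)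
  have h2 : c / ‖v‖^2 = c' / ‖v‖^2 := smul_left_injective ℝ hv h
  field_simp at h2
  exact h2

set_option maxHeartbeats 1000000 in
/-- The Mendivil–Taylor self-affine set has very thick shadows in all directions iff
`(1 - √(2s-1))/2 ≤ t`. -/
theorem mendivilTaylor_veryThickShadows_iff
    (t s : ℝ) (ht0 : 0 < t) (ht : t < 1 / 2) (hs : 1 / 2 < s) (hs1 : s < 1)
    (hst : s + t < 1)
    (K : Set (EuclideanSpace ℝ (Fin 2))) (hKne : K.Nonempty) (hKcpt : IsCompact K)
    (hKattr : K =
      ((fun p => mk2 (t * p 0) (s * p 1)) '' K) ∪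
      ((fun p => mk2 (s * p 0) (t * p 1 + (1 - t))) '' K) ∪
      ((fun p => mk2 (s * p 0 + (1 - s)) (t * p 1)) '' K) ∪
      ((fun p => mk2 (t * p 0 + (1 - t)) (s * p 1 + (1 - s))) '' K)) :
    (∀ (W : Submodule ℝ (EuclideanSpace ℝ (Fin 2))), finrank ℝ W = 1 →
      orthProj W '' K = orthProj W '' unitSq) ↔
    (1 - Real.sqrt (2 * s - 1)) / 2 ≤ t := by
  have h2s : (0:ℝ) ≤ 2 * s - 1 := by linarith
  have hKsq := K_subset_unitSq ht0 ht hs hs1 hKne hKcpt hKattr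
  constructor
  · -- necessity
    intro h
    by_contra hns
    push_neg at hns
    have hsqlt : Real.sqrt (2 * s - 1) < 1 - 2 * t := by linarith
    have hcondlt : 2 * s - 1 < (1 - 2*t)^2 := by
      nlinarith [Real.sq_sqrt h2s, Real.sqrt_nonneg (2 * s - 1)]
    have hκ : (0:ℝ) < 1 - 2*t := by linarith
    have hσ : (0:ℝ) < 2*s - 1 := by linarith
    set r : ℝ := (1/(1 - 2*t) + (1 - 2*t)/(2*s - 1))/2 with hrdef
    have hid1 : r * (1 - 2*t) * (2*(2*s - 1)) = (2*s - 1) + (1 - 2*t)^2 * 1 := by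
      rw [hrdef]; field_simp
    have hid2 : r * (2*s - 1) * (2*(1 - 2*t)) = (2*s - 1) * 1 + (1 - 2*t)^2 := by
      rw [hrdef]; field_simp
    have hr1 : 1 < r * (1 - 2*t) := by nlinarith
    have hr2 : r * (2*s - 1) < 1 - 2*t := by nlinarith
    have hr3 : t < r * (1 - s - t) := by nlinarith
    have hr0 : 0 < r := by nlinarith
    -- the gap point
    set L : ℝ := max (r*s - (1 - t)) (r*t) with hL
    set U : ℝ := min (r*(1 - s) - t) (r*(1 - t) - 1) with hU
    set z : ℝ := (L + U)/2 with hz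
    have hLU : L < U := by
      rw [hL, hU]
      apply max_lt <;> apply lt_min <;> nlinarith
    have hzL1 : r*s - (1 - t) < z := by
      have := le_max_left (r*s - (1 - t)) (r*t)
      rw [hz]; rw [hL] at hLU ⊢; linarith
    have hzL2 : r*t < z := by
      have := le_max_right (r*s - (1 - t)) (r*t)
      rw [hz]; rw [hL] at hLU ⊢; linarith
    have hzU1 : z < r*(1 - s) - t := by
      have := min_le_left (r*(1 - s) - t) (r*(1 - t) - 1)
      rw [hz]; rw [hU] at hLU ⊢; linarith
    have hzU2 : z < r*(1 - t) - 1 := by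
      have := min_le_right (r*(1 - s) - t) (r*(1 - t) - 1)
      rw [hz]; rw [hU] at hLU ⊢; linarith
    -- the direction
    set v : EuclideanSpace ℝ (Fin 2) := mk2 r (-1) with hv
    have hvne : v ≠ 0 := by
      intro hcontra
      have : v 1 = (0 : EuclideanSpace ℝ (Fin 2)) 1 := by rw [hcontra]
      rw [hv, mk2_apply1] at this
      norm_num at this
    have happ := h (Submodule.span ℝ {v}) (finrank_span_singleton hvne)
    rw [proj_image, proj_image] at happ
    have hshadeq : shad K (v 0) (v 1) = shad unitSq (v 0) (v 1) :=
      (Set.image_eq_image (ginj hvne)).mp happ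
    have hv0 : v 0 = r := mk2_apply0 r (-1)
    have hv1 : v 1 = -1 := mk2_apply1 r (-1)
    rw [hv0, hv1, shad_unitSq] at hshadeq
    have hzIcc : z ∈ Icc (mlo r (-1)) (mhi r (-1)) := by
      rw [mlo_pn hr0.le (by norm_num), mhi_pn hr0.le (by norm_num)]
      constructor <;> nlinarith
    rw [← hshadeq] at hzIcc
    -- but z is not in the shadow of K
    rcases shad_decomp hKattr r (-1) hzIcc with h1 | h1 | h1 | h1
    · have h2 := (shad_subset_Icc hKsq (r*t) ((-1)*s) h1).2
      rw [mhi_pn (by positivity) (by nlinarith)] at h2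
      nlinarith
    · have h2 := (shad_subset_Icc hKsq (r*s) ((-1)*t) h1).2
      rw [mhi_pn (by positivity) (by nlinarith)] at h2
      nlinarith
    · have h2 := (shad_subset_Icc hKsq (r*s) ((-1)*t) h1).1
      rw [mlo_pn (by positivity) (by nlinarith)] at h2
      nlinarith
    · have h2 := (shad_subset_Icc hKsq (r*t) ((-1)*s) h1).1
      rw [mlo_pn (by positivity) (by nlinarith)] at h2
      nlinarith
  · -- sufficiency
    intro hsqrt W hW
    have hcond : (1 - 2*t)^2 ≤ 2*s - 1 := by
      have h1 : 1 - 2*t ≤ Real.sqrt (2*s - 1) := by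
        have : (1 - Real.sqrt (2 * s - 1)) / 2 ≤ t := hsqrt
        have h2 : Real.sqrt (2 * s - 1) = Real.sqrt (2*s - 1) := by norm_num
        linarith [this]
      calc (1 - 2*t)^2 ≤ (Real.sqrt (2*s - 1))^2 := by
            apply pow_le_pow_left₀ (by linarith) h1
      _ = 2*s - 1 := Real.sq_sqrt (by linarith)
    obtain ⟨w, hw⟩ : ∃ w : W, w ≠ 0 := by
      rw [← Module.finrank_pos_iff_exists_ne_zero (R := ℝ)]
      rw [hW]; norm_num
    have hvne : (w : EuclideanSpace ℝ (Fin 2)) ≠ 0 := fun hc => hw (Subtype.ext hc)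
    have hWv : W = Submodule.span ℝ {(w : EuclideanSpace ℝ (Fin 2))} := by
      refine (Submodule.eq_of_le_of_finrank_eq ?_ ?_).symm
      · rw [Submodule.span_singleton_le_iff_mem]; exact w.2
      · rw [finrank_span_singleton hvne, hW]
    rw [hWv, proj_image, proj_image,
      shad_eq_Icc ht0 ht hs hs1 hst hcond hKne hKcpt hKattr, shad_unitSq]
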